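/- Let G be a hypergraph containing a β-cycle C = v₁, e₁, …, v_ℓ, e_ℓ, v₁ of length ℓ ≥ 3, and define the sets U_j, j ∈ [ℓ], as follows: U₁ := (e_ℓ ∩ e₁) \ ⋃_{j=2}^{ℓ−1} e_j and U_i := (e_{i−1} ∩ e_i) \ ⋃_{j ∈ [ℓ]\{i−1,i}} e_j for i ≥ 2. Then the nest-set width of G satisfies nsw(G) ≥ min_{k ∈ [ℓ]} Σ_{j ∈ [ℓ]\{k}} |U_j|. -/

import Mathlib

open Finset

/-- `N` is a nest-set of the hypergraph with edge set `E`: the family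
`{e \ N : e ∈ E, e ∩ N ≠ ∅}` is totally ordered by inclusion. -/
def IsNestSet {V : Type*} [DecidableEq V] (E : Finset (Finset V)) (N : Finset V) : Prop :=
  ∀ e₁ ∈ E, ∀ e₂ ∈ E, (e₁ ∩ N).Nonempty → (e₂ ∩ N).Nonempty →
    e₁ \ N ⊆ e₂ \ N ∨ e₂ \ N ⊆ e₁ \ N

/-- `v` is a nest point: the edges containing `v` are totally ordered by inclusion. -/
def IsNestPoint {V : Type*} (E : Finset (Finset V)) (v : V) : Prop :=
  ∀ e₁ ∈ E, ∀ e₂ ∈ E, v ∈ e₁ → v ∈ e₂ → e₁ ⊆ e₂ ∨ e₂ ⊆ e₁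

/-- The edge set of the hypergraph `G - N`. -/
def hreduce {V : Type*} [DecidableEq V] (E : Finset (Finset V)) (N : Finset V) :
    Finset (Finset V) :=
  (E.image (fun e => e \ N)).filter (fun e => 2 ≤ e.card)

/-- `gap(G, N) = max { |N| - |e ∩ N| : e ∈ E, e ∩ N ≠ ∅ }`. -/
def hgap {V : Type*} [DecidableEq V] (E : Finset (Finset V)) (N : Finset V) : ℕ :=
  (E.filter (fun e => (e ∩ N).Nonempty)).sup (fun e => N.card - (e ∩ N).card)

/-- `L = N₁, …, N_t` is a nest-set elimination order of the hypergraph with node set `Vs`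
and edge set `E`. -/
def IsElimOrder {V : Type*} [DecidableEq V] (Vs : Finset V) (E : Finset (Finset V))
    (L : List (Finset V)) : Prop :=
  L.Pairwise Disjoint ∧ (∀ N ∈ L, N.Nonempty) ∧ L.foldr (· ∪ ·) ∅ = Vs ∧
  ∀ i : Fin L.length, IsNestSet ((L.take i).foldl hreduce E) (L.get i)

/-- The nest-set width of an elimination order: maximum cardinality of an element. -/
def nswOf {V : Type*} (L : List (Finset V)) : ℕ := (L.map Finset.card).foldr max 0

/-- The nest-set gap of an elimination order: max over `i` of
`gap(G - N₁ - ⋯ - N_{i-1}, N_i)`. -/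
def nsgOf {V : Type*} [DecidableEq V] (E : Finset (Finset V)) (L : List (Finset V)) : ℕ :=
  ((List.range L.length).map
    (fun i => hgap ((L.take i).foldl hreduce E) (L.getD i ∅))).foldr max 0

/-- A β-cycle `v₀, e₀, v₁, e₁, …, v_{ℓ-1}, e_{ℓ-1}, v₀` of length `ℓ = l + 3 ≥ 3` in the
hypergraph with edge set `E`: distinct nodes, distinct edges, and `v i` belongs to
`e (i-1)`, `e i` and to no other `e j` (indices cyclic in `Fin (l + 3)`). -/
def IsBetaCycle {V : Type*} (E : Finset (Finset V)) (l : ℕ)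
    (v : Fin (l + 3) → V) (e : Fin (l + 3) → Finset V) : Prop :=
  Function.Injective v ∧ Function.Injective e ∧ (∀ i, e i ∈ E) ∧
  ∀ i j, v i ∈ e j ↔ (j = i ∨ j + 1 = i)

lemma foldr_union_mem {V : Type*} [DecidableEq V] (L : List (Finset V)) (x : V) :
    x ∈ L.foldr (· ∪ ·) ∅ ↔ ∃ s ∈ L, x ∈ s := by
  induction L with
  | nil => simp
  | cons a t ih => simp [ih]

lemma mem_foldl_hreduce {V : Type*} [DecidableEq V] (M : List (Finset V))
    (E : Finset (Finset V)) (s : Finset V) (hs : s ∈ E)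
    (h2 : 2 ≤ (s \ M.foldr (· ∪ ·) ∅).card) :
    s \ M.foldr (· ∪ ·) ∅ ∈ M.foldl hreduce E := by
  induction M generalizing E s with
  | nil => simpa using hs
  | cons a M ih =>
    have hre : s \ (a :: M).foldr (· ∪ ·) ∅ = (s \ a) \ M.foldr (· ∪ ·) ∅ := by
      show s \ (a ∪ _) = _
      exact (sdiff_sdiff s a _).symm
    rw [hre] at h2 ⊢
    show (s \ a) \ M.foldr (· ∪ ·) ∅ ∈ M.foldl hreduce (hreduce E a)
    refine ih (hreduce E a) (s \ a) ?_ h2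
    refine Finset.mem_filter.mpr ⟨Finset.mem_image.mpr ⟨s, hs, rfl⟩, ?_⟩
    exact le_trans h2 (Finset.card_le_card (Finset.sdiff_subset))

open Fin.CommRing in
lemma fin_ne_zero (l c : ℕ) (h1 : 1 ≤ c) (h2 : c ≤ l + 2) : ((c : ℕ) : Fin (l+3)) ≠ 0 := by
  intro h
  rw [Fin.natCast_eq_zero] at h
  exact absurd (Nat.le_of_dvd (by omega) h) (by omega)

open Fin.CommRing in
lemma fin_cast_eq_of_dvd (l c : ℕ) (h : ((c : ℕ) : Fin (l+3)) = 0) (h1 : 1 ≤ c)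
    (h2 : c ≤ 2*l + 5) : c = l + 3 := by
  rw [Fin.natCast_eq_zero] at h
  obtain ⟨k, rfl⟩ := h
  rcases k with _ | _ | k
  · omega
  · omega
  · have : (l+3) * 2 ≤ (l+3) * (k+1+1) := Nat.mul_le_mul_left _ (by omega)
    omega

open Fin.CommRing in
lemma combo {V : Type*} [DecidableEq V] (l : ℕ) (E' : Finset (Finset V)) (N : Finset V)
    (hN : IsNestSet E' N) (f U : Fin (l+3) → Finset V) (hf : ∀ i, f i ∈ E')
    (hU1 : ∀ j, U j ⊆ f (j-1)) (hU2 : ∀ j, U j ⊆ f j)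
    (hU3 : ∀ j k (x : V), x ∈ U j → x ∈ f k → k = j - 1 ∨ k = j)
    (hUne : ∀ j, (U j).Nonempty)
    (i0 : Fin (l+3)) (hi0 : (U i0 ∩ N).Nonempty) :
    ∃ k, ∀ j, j ≠ k → U j ⊆ N := by
  classical
  by_contra hcon
  push_neg at hcon
  have fne : ∀ c : ℕ, 1 ≤ c → c ≤ l + 2 → ((c : ℕ) : Fin (l+3)) ≠ 0 := fin_ne_zero l
  have key : ∀ (P Q a b : Fin (l+3)), (f P ∩ N).Nonempty → (f Q ∩ N).Nonempty →
      ¬U a ⊆ N → ¬U b ⊆ N → (P = a - 1 ∨ P = a) → Q ≠ a - 1 → Q ≠ a →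
      (Q = b - 1 ∨ Q = b) → P ≠ b - 1 → P ≠ b → False := by
    intro P Q a b hP hQ hba hbb hPa hQa1 hQa hQb hPb1 hPb
    obtain ⟨wa, hwaU, hwaN⟩ := Finset.not_subset.mp hba
    obtain ⟨wb, hwbU, hwbN⟩ := Finset.not_subset.mp hbb
    have hwaP : wa ∈ f P := by rcases hPa with h | h <;> rw [h]; exacts [hU1 a hwaU, hU2 a hwaU]
    have hwbQ : wb ∈ f Q := by rcases hQb with h | h <;> rw [h]; exacts [hU1 b hwbU, hU2 b hwbU]
    have hwaQ : wa ∉ f Q := fun hx => by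
      rcases hU3 a Q wa hwaU hx with h | h; exacts [hQa1 h, hQa h]
    have hwbP : wb ∉ f P := fun hx => by
      rcases hU3 b P wb hwbU hx with h | h; exacts [hPb1 h, hPb h]
    rcases hN (f P) (hf P) (f Q) (hf Q) hP hQ with h | h
    · exact hwaQ (Finset.mem_sdiff.mp (h (Finset.mem_sdiff.mpr ⟨hwaP, hwaN⟩))).1
    · exact hwbP (Finset.mem_sdiff.mp (h (Finset.mem_sdiff.mpr ⟨hwbQ, hwbN⟩))).1
  obtain ⟨u0, hu0⟩ := hi0
  have hu0U := (Finset.mem_inter.mp hu0).1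
  have hu0N := (Finset.mem_inter.mp hu0).2
  have hmeti0 : (f i0 ∩ N).Nonempty := ⟨u0, Finset.mem_inter.mpr ⟨hU2 i0 hu0U, hu0N⟩⟩
  have hmeti0' : (f (i0 - 1) ∩ N).Nonempty := ⟨u0, Finset.mem_inter.mpr ⟨hU1 i0 hu0U, hu0N⟩⟩
  have unmet_bad : ∀ j : Fin (l+3), ¬(f j ∩ N).Nonempty → ¬U j ⊆ N ∧ ¬U (j+1) ⊆ N := by
    intro j hj
    constructor
    · intro hsub
      obtain ⟨x, hx⟩ := hUne j
      exact hj ⟨x, Finset.mem_inter.mpr ⟨hU2 j hx, hsub hx⟩⟩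
    · intro hsub
      obtain ⟨x, hx⟩ := hUne (j+1)
      have hxf : x ∈ f (j + 1 - 1) := hU1 _ hx
      have he : j + 1 - 1 = j := by ring
      rw [he] at hxf
      exact hj ⟨x, Finset.mem_inter.mpr ⟨hxf, hsub hx⟩⟩
  by_cases hall : ∀ j, (f j ∩ N).Nonempty
  · obtain ⟨a, -, ha⟩ := hcon i0
    obtain ⟨b, hbne, hb⟩ := hcon a
    by_cases h1 : b = a + 1
    · subst h1
      refine key (a-1) (a+1) a (a+1) (hall _) (hall _) ha hb (Or.inl rfl) ?_ ?_ (Or.inr rfl) ?_ ?_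
      · intro h; exact fne 2 (by omega) (by omega) (by push_cast; linear_combination h)
      · intro h; exact fne 1 (by omega) (by omega) (by push_cast; linear_combination h)
      · intro h; exact fne 1 (by omega) (by omega) (by push_cast; linear_combination -h)
      · intro h; exact fne 2 (by omega) (by omega) (by push_cast; linear_combination -h)
    · by_cases h2 : a = b + 1
      · subst h2
        refine key (b-1) (b+1) b (b+1) (hall _) (hall _) hb ha (Or.inl rfl) ?_ ?_ (Or.inr rfl) ?_ ?_
        · intro h; exact fne 2 (by omega) (by omega) (by push_cast; linear_combination h)
        · intro h; exact fne 1 (by omega) (by omega) (by push_cast; linear_combination h)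
        · intro h; exact fne 1 (by omega) (by omega) (by push_cast; linear_combination -h)
        · intro h; exact fne 2 (by omega) (by omega) (by push_cast; linear_combination -h)
      · refine key a b a b (hall a) (hall b) ha hb (Or.inr rfl) ?_ hbne (Or.inr rfl) ?_ (Ne.symm hbne)
        · intro h; exact h2 (by linear_combination -h)
        · intro h; exact h1 (by linear_combination -h)
  · push_neg at hall
    obtain ⟨j0, hj0⟩ := hall
    rw [← Finset.not_nonempty_iff_eq_empty] at hj0
    have hw1pos : 0 < (i0 - j0).val := by
      refine Nat.pos_of_ne_zero fun h => hj0 ?_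
      have h0 : i0 - j0 = 0 := by rw [Fin.ext_iff, Fin.val_zero]; exact h
      have : i0 = j0 := by linear_combination h0
      rwa [this] at hmeti0
    have hw1met : (f (j0 + (((i0 - j0).val : ℕ) : Fin (l+3))) ∩ N).Nonempty := by
      rw [Fin.cast_val_eq_self, add_comm, sub_add_cancel]
      exact hmeti0
    have hex1 : ∃ t : ℕ, 0 < t ∧ (f (j0 + (t : Fin (l+3))) ∩ N).Nonempty :=
      ⟨_, hw1pos, hw1met⟩
    have hw2pos : 0 < (j0 - (i0 - 1)).val := by
      refine Nat.pos_of_ne_zero fun h => hj0 ?_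
      have h0 : j0 - (i0 - 1) = 0 := by rw [Fin.ext_iff, Fin.val_zero]; exact h
      have : j0 = i0 - 1 := by linear_combination h0
      rwa [← this] at hmeti0'
    have hw2met : (f (j0 - (((j0 - (i0 - 1)).val : ℕ) : Fin (l+3))) ∩ N).Nonempty := by
      rw [Fin.cast_val_eq_self, sub_sub_cancel]
      exact hmeti0'
    have hex2 : ∃ t : ℕ, 0 < t ∧ (f (j0 - (t : Fin (l+3))) ∩ N).Nonempty :=
      ⟨_, hw2pos, hw2met⟩
    set t1 := Nat.find hex1 with ht1def
    obtain ⟨ht1pos, hmet_q⟩ := Nat.find_spec hex1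
    have ht1min : ∀ s, s < t1 → ¬(0 < s ∧ (f (j0 + (s : Fin (l+3))) ∩ N).Nonempty) :=
      fun s hs => Nat.find_min hex1 hs
    set t2 := Nat.find hex2 with ht2def
    obtain ⟨ht2pos, hmet_p⟩ := Nat.find_spec hex2
    have ht2min : ∀ s, s < t2 → ¬(0 < s ∧ (f (j0 - (s : Fin (l+3))) ∩ N).Nonempty) :=
      fun s hs => Nat.find_min hex2 hs
    have ht1le : t1 ≤ l + 2 := by
      refine le_trans (Nat.find_min' hex1 ⟨hw1pos, hw1met⟩) ?_
      have := (i0 - j0).isLt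
      omega
    have ht2le : t2 ≤ l + 2 := by
      refine le_trans (Nat.find_min' hex2 ⟨hw2pos, hw2met⟩) ?_
      have := (j0 - (i0 - 1)).isLt
      omega
    set p := j0 - ((t2 : ℕ) : Fin (l+3)) with hpdef
    set q := j0 + ((t1 : ℕ) : Fin (l+3)) with hqdef
    have hrange : ∀ m : Fin (l+3), (f m ∩ N).Nonempty →
        ∃ t : ℕ, t1 ≤ t ∧ t + t2 ≤ l + 3 ∧ m = j0 + ((t : ℕ) : Fin (l+3)) := by
      intro m hm
      set t := (m - j0).val with htdef
      have htlt : t < l + 3 := (m - j0).isLt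
      have ht0 : 0 < t := by
        refine Nat.pos_of_ne_zero fun h => hj0 ?_
        have h0 : m - j0 = 0 := by rw [Fin.ext_iff, Fin.val_zero]; exact h
        have : m = j0 := by linear_combination h0
        rwa [this] at hm
      have hmeq : m = j0 + ((t : ℕ) : Fin (l+3)) := by
        rw [htdef, Fin.cast_val_eq_self]
        ring
      have hge : t1 ≤ t := le_of_not_gt fun hlt => ht1min t hlt ⟨ht0, by rw [← hmeq]; exact hm⟩
      refine ⟨t, hge, ?_, hmeq⟩
      by_contra hgt
      push_neg at hgt
      have hs2 : l + 3 - t < t2 := by omega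
      refine ht2min (l + 3 - t) hs2 ⟨by omega, ?_⟩
      have hc : (((l + 3 - t : ℕ) : ℕ) : Fin (l+3)) = - ((t : ℕ) : Fin (l+3)) := by
        have h1 : (((l + 3 : ℕ) : ℕ) : Fin (l+3)) = 0 := by
          exact_mod_cast Fin.natCast_self (l+3)
        rw [Nat.cast_sub htlt.le, h1, zero_sub]
      rw [hc, sub_neg_eq_add, ← hmeq]
      exact hm
    by_cases hqp : q = p
    · have hz : ((t1 + t2 : ℕ) : Fin (l+3)) = 0 := by push_cast; linear_combination hqp
      have hsum : t1 + t2 = l + 3 := fin_cast_eq_of_dvd l _ hz (by omega) (by omega)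
      have honly : ∀ m, (f m ∩ N).Nonempty → m = q := by
        intro m hm
        obtain ⟨t, hge, hle, hmeq⟩ := hrange m hm
        have : t = t1 := by omega
        rw [hmeq, this]
      have hc1 := honly i0 hmeti0
      have hc2 := honly (i0 - 1) hmeti0'
      have hz1 : ((1 : ℕ) : Fin (l+3)) = 0 := by
        push_cast
        linear_combination hc1 - hc2
      exact fne 1 (by omega) (by omega) hz1
    · by_cases hpq1 : p = q + 1
      · have hz : ((t1 + t2 + 1 : ℕ) : Fin (l+3)) = 0 := by
          push_cast
          linear_combination - hpq1
        have hsum : t1 + t2 + 1 = l + 3 := fin_cast_eq_of_dvd l _ hz (by omega) (by omega)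
        have honly : ∀ m, (f m ∩ N).Nonempty → m = q ∨ m = p := by
          intro m hm
          obtain ⟨t, hge, hle, hmeq⟩ := hrange m hm
          have hcase : t = t1 ∨ t = t1 + 1 := by omega
          rcases hcase with h | h
          · left; rw [hmeq, h]
          · right; rw [hmeq, h, hpq1, hqdef]; push_cast; ring
        have hb1 : ¬(f (q - 1) ∩ N).Nonempty := by
          intro hm
          rcases honly _ hm with h | h
          · exact fne 1 (by omega) (by omega) (by push_cast; linear_combination - h)
          · rw [hpq1] at h
            exact fne 2 (by omega) (by omega) (by push_cast; linear_combination - h)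
        have hb2 : ¬(f (q + 2) ∩ N).Nonempty := by
          intro hm
          rcases honly _ hm with h | h
          · exact fne 2 (by omega) (by omega) (by push_cast; linear_combination h)
          · rw [hpq1] at h
            exact fne 1 (by omega) (by omega) (by push_cast; linear_combination h)
        obtain ⟨hbq', hbq⟩ := unmet_bad _ hb1
        have he1 : q - 1 + 1 = q := by ring
        rw [he1] at hbq
        obtain ⟨hbq2, -⟩ := unmet_bad _ hb2
        have hmet_p' : (f (q + 1) ∩ N).Nonempty := by rw [← hpq1]; exact hmet_p
        refine key q (q+1) q (q+2) hmet_q hmet_p' hbq hbq2 (Or.inr rfl) ?_ ?_ (Or.inl (by ring)) ?_ ?_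
        · intro h; exact fne 2 (by omega) (by omega) (by push_cast; linear_combination h)
        · intro h; exact fne 1 (by omega) (by omega) (by push_cast; linear_combination h)
        · intro h; exact fne 1 (by omega) (by omega) (by push_cast; linear_combination - h)
        · intro h; exact fne 2 (by omega) (by omega) (by push_cast; linear_combination - h)
      · by_cases hqp1 : q = p + 1
        · have h1le : (1 : ℕ) ≤ t1 + t2 := by omega
          have hz : ((t1 + t2 - 1 : ℕ) : Fin (l+3)) = 0 := by
            push_cast [h1le]
            linear_combination hqp1
          have hsum : t1 + t2 - 1 = l + 3 := fin_cast_eq_of_dvd l _ hz (by omega) (by omega)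
          obtain ⟨t, hge, hle, -⟩ := hrange q hmet_q
          omega
        · -- generic subcase
          have hbada : ¬U (p+1) ⊆ N := by
            by_cases ht2' : t2 = 1
            · have hp1 : p + 1 = j0 := by
                rw [hpdef, ht2']
                push_cast
                ring
              rw [hp1]
              exact (unmet_bad j0 hj0).1
            · have h2t : 2 ≤ t2 := by omega
              have hun : ¬(f (j0 - (((t2 - 1 : ℕ) : ℕ) : Fin (l+3))) ∩ N).Nonempty :=
                fun hm => ht2min (t2 - 1) (by omega) ⟨by omega, hm⟩
              have hpe : p + 1 = j0 - (((t2 - 1 : ℕ) : ℕ) : Fin (l+3)) := by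
                rw [hpdef, Nat.cast_sub (by omega : 1 ≤ t2)]
                push_cast
                ring
              rw [hpe]
              exact (unmet_bad _ hun).1
          have hbadb : ¬U q ⊆ N := by
            by_cases ht1' : t1 = 1
            · have hq1 : q = j0 + 1 := by rw [hqdef, ht1']; push_cast; ring
              rw [hq1]
              exact (unmet_bad j0 hj0).2
            · have hun : ¬(f (j0 + (((t1 - 1 : ℕ) : ℕ) : Fin (l+3))) ∩ N).Nonempty :=
                fun hm => ht1min (t1 - 1) (by omega) ⟨by omega, hm⟩
              have hbb := (unmet_bad _ hun).2
              have hqe : j0 + (((t1 - 1 : ℕ) : ℕ) : Fin (l+3)) + 1 = q := by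
                rw [hqdef, Nat.cast_sub (by omega : 1 ≤ t1)]
                push_cast
                ring
              rwa [hqe] at hbb
          refine key p q (p+1) q hmet_p hmet_q hbada hbadb (Or.inl (by ring)) ?_ ?_
            (Or.inr rfl) ?_ ?_
          · intro h; exact hqp (by linear_combination h)
          · exact hqp1
          · intro h; exact hqp1 (by linear_combination - h)
          · exact fun h => hqp h.symm

/-- If a hypergraph `G = (Vs, E)` contains a β-cycle of length `ℓ = l + 3`, with the sets
`U j` as in the paper, then `nsw(G) ≥ min_k ∑_{j ≠ k} |U j|`; i.e. every nest-set
elimination order has an element of cardinality at least this bound. -/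
theorem stmt_6 {V : Type*} [DecidableEq V] (Vs : Finset V) (E : Finset (Finset V))
    (hE : ∀ e ∈ E, e ⊆ Vs) (l : ℕ)
    (v : Fin (l + 3) → V) (e : Fin (l + 3) → Finset V)
    (hC : IsBetaCycle E l v e) :
    let U : Fin (l + 3) → Finset V :=
      fun i => (e (i - 1) ∩ e i) \ ((Finset.univ.erase (i - 1)).erase i).sup e
    ∀ L : List (Finset V), IsElimOrder Vs E L →
      ∃ N ∈ L,
        Finset.univ.inf' Finset.univ_nonempty
          (fun k : Fin (l + 3) => ∑ j ∈ Finset.univ.erase k, (U j).card) ≤ N.card := by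
  intro U L hL
  classical
  letI : CommRing (Fin (l+3)) := Fin.instCommRing _
  obtain ⟨-, -, hunion, hnest⟩ := hL
  obtain ⟨hvinj, -, heE, hmem⟩ := hC
  have fne : ∀ c : ℕ, 1 ≤ c → c ≤ l + 2 → ((c : ℕ) : Fin (l+3)) ≠ 0 := fin_ne_zero l
  have hUdef : ∀ i, U i = (e (i - 1) ∩ e i) \ ((Finset.univ.erase (i - 1)).erase i).sup e :=
    fun _ => rfl
  have hUsub1 : ∀ j, U j ⊆ e (j - 1) := by
    intro j x hx
    rw [hUdef] at hx
    exact (Finset.mem_inter.mp (Finset.mem_sdiff.mp hx).1).1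
  have hUsub2 : ∀ j, U j ⊆ e j := by
    intro j x hx
    rw [hUdef] at hx
    exact (Finset.mem_inter.mp (Finset.mem_sdiff.mp hx).1).2
  have hU3e : ∀ j k (x : V), x ∈ U j → x ∈ e k → k = j - 1 ∨ k = j := by
    intro j k x hx hk
    by_contra hcc
    push_neg at hcc
    have hkmem : k ∈ (Finset.univ.erase (j-1)).erase j :=
      Finset.mem_erase.mpr ⟨hcc.2, Finset.mem_erase.mpr ⟨hcc.1, Finset.mem_univ _⟩⟩
    have : x ∈ ((Finset.univ.erase (j-1)).erase j).sup e := Finset.mem_sup.mpr ⟨k, hkmem, hk⟩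
    rw [hUdef] at hx
    exact (Finset.mem_sdiff.mp hx).2 this
  have hUv : ∀ j, v j ∈ U j := by
    intro j
    rw [hUdef]
    refine Finset.mem_sdiff.mpr ⟨Finset.mem_inter.mpr ⟨?_, ?_⟩, ?_⟩
    · exact (hmem j (j-1)).mpr (Or.inr (by ring))
    · exact (hmem j j).mpr (Or.inl rfl)
    · intro hsup
      obtain ⟨k, hk, hvk⟩ := Finset.mem_sup.mp hsup
      rcases (hmem j k).mp hvk with h | h
      · exact (Finset.mem_erase.mp hk).1 h
      · exact (Finset.mem_erase.mp (Finset.mem_erase.mp hk).2).1 (by linear_combination h)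
  have hUne : ∀ j, (U j).Nonempty := fun j => ⟨v j, hUv j⟩
  set bigU : Finset V := Finset.univ.biUnion U with hbigU
  have hexP : ∃ i, i < L.length ∧ ((L.getD i ∅) ∩ bigU).Nonempty := by
    have hv0 : v 0 ∈ Vs := hE _ (heE 0) ((hmem 0 0).mpr (Or.inl rfl))
    rw [← hunion] at hv0
    obtain ⟨s, hsL, hvs⟩ := (foldr_union_mem L (v 0)).mp hv0
    obtain ⟨i, rfl⟩ := List.mem_iff_get.mp hsL
    refine ⟨i.val, i.isLt, ⟨v 0, Finset.mem_inter.mpr ⟨?_, ?_⟩⟩⟩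
    · rw [List.getD_eq_getElem L ∅ i.isLt]
      simpa using hvs
    · exact Finset.mem_biUnion.mpr ⟨0, Finset.mem_univ _, hUv 0⟩
  set i' := Nat.find hexP with hi'def
  obtain ⟨hi'len, hi'ne⟩ := Nat.find_spec hexP
  set X : Finset V := (L.take i').foldr (· ∪ ·) ∅ with hXdef
  set N : Finset V := L.get ⟨i', hi'len⟩ with hNdef
  have hXbigU : ∀ x ∈ X, x ∉ bigU := by
    intro x hx hxU
    obtain ⟨s, hs, hxs⟩ := (foldr_union_mem _ x).mp hx
    obtain ⟨⟨m, hm⟩, rfl⟩ := List.mem_iff_get.mp hs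
    have hmlt : m < i' ∧ m < L.length := by
      have := hm
      rw [List.length_take] at this
      omega
    refine Nat.find_min hexP hmlt.1 ⟨hmlt.2, ⟨x, Finset.mem_inter.mpr ⟨?_, hxU⟩⟩⟩
    rw [List.getD_eq_getElem L ∅ hmlt.2]
    have : (L.take i').get ⟨m, hm⟩ = L[m] := by
      rw [List.get_eq_getElem, List.getElem_take]
    rwa [this] at hxs
  have hXU : ∀ (j : Fin (l+3)) (x : V), x ∈ U j → x ∉ X :=
    fun j x hx hxX => hXbigU x hxX (Finset.mem_biUnion.mpr ⟨j, Finset.mem_univ _, hx⟩)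
  have hvne : ∀ j : Fin (l+3), v j ≠ v (j+1) := by
    intro j h
    have := hvinj h
    exact fne 1 (by omega) (by omega) (by push_cast; linear_combination - this)
  have hcard : ∀ j : Fin (l+3), 2 ≤ (e j \ X).card := by
    intro j
    have hvj : v j ∈ e j \ X :=
      Finset.mem_sdiff.mpr ⟨(hmem j j).mpr (Or.inl rfl), hXU j _ (hUv j)⟩
    have hvj1 : v (j+1) ∈ e j \ X :=
      Finset.mem_sdiff.mpr ⟨(hmem (j+1) j).mpr (Or.inr rfl), hXU (j+1) _ (hUv (j+1))⟩
    calc 2 = ({v j, v (j+1)} : Finset V).card := (Finset.card_pair (hvne j)).symm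
      _ ≤ (e j \ X).card := Finset.card_le_card (by
            intro x hx
            rcases Finset.mem_insert.mp hx with rfl | hx
            · exact hvj
            · rw [Finset.mem_singleton.mp hx]; exact hvj1)
  have hfmem : ∀ j : Fin (l+3), e j \ X ∈ (L.take i').foldl hreduce E :=
    fun j => mem_foldl_hreduce _ _ _ (heE j) (hcard j)
  have hNest : IsNestSet ((L.take i').foldl hreduce E) N := hnest ⟨i', hi'len⟩
  obtain ⟨u, hu⟩ := hi'ne
  have huN : u ∈ N := by
    have := (Finset.mem_inter.mp hu).1
    rwa [List.getD_eq_getElem L ∅ hi'len] at this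
  obtain ⟨i0, -, hi0U⟩ := Finset.mem_biUnion.mp (Finset.mem_inter.mp hu).2
  have hcombo := combo l ((L.take i').foldl hreduce E) N hNest (fun j => e j \ X) U hfmem
    (fun j x hx => Finset.mem_sdiff.mpr ⟨hUsub1 j hx, hXU j x hx⟩)
    (fun j x hx => Finset.mem_sdiff.mpr ⟨hUsub2 j hx, hXU j x hx⟩)
    (fun j k x hx hxk => hU3e j k x hx (Finset.mem_sdiff.mp hxk).1)
    hUne i0 ⟨u, Finset.mem_inter.mpr ⟨hi0U, huN⟩⟩
  obtain ⟨k, hk⟩ := hcombo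
  refine ⟨N, by rw [hNdef]; exact L.get_mem _, ?_⟩
  refine le_trans (Finset.inf'_le _ (Finset.mem_univ k)) ?_
  have hdisj : ∀ j ∈ Finset.univ.erase k, ∀ j' ∈ Finset.univ.erase k, j ≠ j' →
      Disjoint (U j) (U j') := by
    intro j _ j' _ hjj'
    rw [Finset.disjoint_left]
    intro x hxj hxj'
    rcases hU3e j j' x hxj (hUsub2 j' hxj') with h | h
    · rcases hU3e j' j x hxj' (hUsub2 j hxj) with h' | h'
      · rw [h] at h'
        exact fne 2 (by omega) (by omega) (by push_cast; linear_combination h')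
      · exact hjj' h'
    · exact hjj'.symm h
  rw [← Finset.card_biUnion hdisj]
  refine Finset.card_le_card (Finset.biUnion_subset.mpr fun j hj => hk j (Finset.mem_erase.mp hj).1)
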